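/- Let I ⊆ ℝ, f = (f_1,…,f_m)ᵀ with f_i : I → ℝ, and suppose c* ∈ ℝ^m \ {0} and points s_1 < ⋯ < s_m in I satisfy c*ᵀ f(s_i) = (−1)^i for i = 1,…,m and |c*ᵀ f(t)| ≤ 1 for all t ∈ I, and that F = (f_i(s_j))_{i,j=1}^m is invertible. Put J = diag(−1,1,…,(−1)^m) and w = J F⁻¹ c* / ‖c*‖₂², assume all w_i ≥ 0, and let ξ_{c*} be the design assigning mass w_i to s_i. If 1/‖c*‖₂² is the smallest eigenvalue of M(ξ_{c*}), then ξ_{c*} is E-optimal: for every design η on I, λ_min(M(η)) ≤ λ_min(M(ξ_{c*})) = 1/‖c*‖₂². -/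

import Mathlib

open Matrix Finset

/-- A design: a probability measure with finite support on `ℝ`. -/
structure Design where
  support : Finset ℝ
  weight : ℝ → ℝ
  pos : ∀ t ∈ support, 0 < weight t
  zero : ∀ t ∉ support, weight t = 0
  sum_one : ∑ t ∈ support, weight t = 1

/-- Information matrix `M(ξ) = Σ ξ({t}) f(t) f(t)ᵀ` of a design. -/
noncomputable def Design.infoMatrix {m : ℕ} (ξ : Design) (f : ℝ → Fin m → ℝ) :
    Matrix (Fin m) (Fin m) ℝ :=
  ∑ t ∈ ξ.support, ξ.weight t • Matrix.vecMulVec (f t) (f t)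

def IsEigenvalue {m : ℕ} (M : Matrix (Fin m) (Fin m) ℝ) (r : ℝ) : Prop :=
  ∃ v : Fin m → ℝ, v ≠ 0 ∧ M.mulVec v = r • v

noncomputable def lambdaMin {m : ℕ} (M : Matrix (Fin m) (Fin m) ℝ) : ℝ :=
  sInf {r | IsEigenvalue M r}

lemma dp_sum {m : ℕ} {ι : Type*} (s : Finset ι) (u : Fin m → ℝ) (g : ι → Fin m → ℝ) :
    u ⬝ᵥ (∑ t ∈ s, g t) = ∑ t ∈ s, u ⬝ᵥ g t := by
  simp only [dotProduct, Finset.sum_apply, Finset.mul_sum]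
  rw [Finset.sum_comm]

lemma sum_mv {m : ℕ} {ι : Type*} (s : Finset ι) (M : ι → Matrix (Fin m) (Fin m) ℝ)
    (v : Fin m → ℝ) : (∑ t ∈ s, M t) *ᵥ v = ∑ t ∈ s, (M t) *ᵥ v := by
  ext i
  simp only [Matrix.mulVec, dotProduct, Finset.sum_apply, Matrix.sum_apply,
    Finset.sum_mul]
  rw [Finset.sum_comm]

lemma mv_sum {m : ℕ} {ι : Type*} (s : Finset ι) (M : Matrix (Fin m) (Fin m) ℝ)
    (g : ι → Fin m → ℝ) : M *ᵥ (∑ t ∈ s, g t) = ∑ t ∈ s, M *ᵥ (g t) := by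
  ext i
  simp only [Matrix.mulVec, dotProduct, Finset.sum_apply, Finset.mul_sum]
  rw [Finset.sum_comm]

lemma vmv_mulVec {m : ℕ} (a b v : Fin m → ℝ) :
    (Matrix.vecMulVec a b) *ᵥ v = (b ⬝ᵥ v) • a := by
  ext i
  simp only [Matrix.mulVec, dotProduct, Matrix.vecMulVec_apply, Pi.smul_apply,
    smul_eq_mul, Finset.sum_mul, Finset.mul_sum]
  exact Finset.sum_congr rfl fun j _ => by ring

lemma quad_form {m : ℕ} (η : Design) (f : ℝ → Fin m → ℝ) (u v : Fin m → ℝ) :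
    u ⬝ᵥ (η.infoMatrix f) *ᵥ v
      = ∑ t ∈ η.support, η.weight t * ((f t ⬝ᵥ u) * (f t ⬝ᵥ v)) := by
  unfold Design.infoMatrix
  rw [sum_mv, dp_sum]
  refine Finset.sum_congr rfl fun t _ => ?_
  rw [Matrix.smul_mulVec, vmv_mulVec, smul_smul, dotProduct_smul, smul_eq_mul,
    dotProduct_comm u (f t)]
  ring

lemma info_isHermitian {m : ℕ} (η : Design) (f : ℝ → Fin m → ℝ) :
    (η.infoMatrix f).IsHermitian := by
  unfold Design.infoMatrix Matrix.IsHermitian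
  ext i j
  simp [Matrix.conjTranspose_apply, Matrix.sum_apply, Matrix.vecMulVec_apply, mul_comm]

lemma symm_dot {m : ℕ} {A : Matrix (Fin m) (Fin m) ℝ} (hA : A.IsHermitian)
    (u v : Fin m → ℝ) : u ⬝ᵥ (A *ᵥ v) = (A *ᵥ u) ⬝ᵥ v := by
  simp only [dotProduct, Matrix.mulVec, Finset.mul_sum, Finset.sum_mul]
  rw [Finset.sum_comm]
  refine Finset.sum_congr rfl fun j _ => Finset.sum_congr rfl fun i _ => ?_
  have h : A i j = A j i := by
    have := congrFun (congrFun hA i) j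
    simpa [Matrix.conjTranspose_apply] using this.symm
  rw [h]; ring

/-- under equioscillation, boundedness `|c*ᵀ f| ≤ 1` on `I`,
nonnegative Chebyshev weights, and the assumption that `1/‖c*‖²` is the smallest
eigenvalue of `M(ξ_{c*})`, the design `ξ_{c*}` is E-optimal. -/
theorem stmt1 (m : ℕ) (hm : 1 ≤ m) (I : Set ℝ) (f : ℝ → Fin m → ℝ)
    (cstar : Fin m → ℝ) (hcs : cstar ≠ 0)
    (s : Fin m → ℝ) (hs : StrictMono s) (hsI : ∀ i, s i ∈ I)
    (hbound : ∀ t ∈ I, |cstar ⬝ᵥ f t| ≤ 1)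
    (hosc : ∀ i : Fin m, cstar ⬝ᵥ f (s i) = (-1 : ℝ) ^ (i.val + 1))
    (F : Matrix (Fin m) (Fin m) ℝ) (hF : F = Matrix.of fun i j => f (s j) i)
    (hFinv : IsUnit F.det)
    (J : Matrix (Fin m) (Fin m) ℝ)
    (hJ : J = Matrix.diagonal fun i : Fin m => (-1 : ℝ) ^ (i.val + 1))
    (w : Fin m → ℝ)
    (hw : w = (∑ i, (cstar i) ^ 2)⁻¹ • ((J * F⁻¹).mulVec cstar))
    (hwpos : ∀ i, 0 ≤ w i)
    (Mstar : Matrix (Fin m) (Fin m) ℝ)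
    (hM : Mstar = ∑ i, w i • Matrix.vecMulVec (f (s i)) (f (s i)))
    (hleast : IsLeast {r | IsEigenvalue Mstar r} ((∑ i, (cstar i) ^ 2)⁻¹)) :
    lambdaMin Mstar = (∑ i, (cstar i) ^ 2)⁻¹ ∧
      ∀ η : Design, ↑η.support ⊆ I → lambdaMin (η.infoMatrix f) ≤ lambdaMin Mstar := by
  have part1 : lambdaMin Mstar = (∑ i, (cstar i) ^ 2)⁻¹ := hleast.csInf_eq
  refine ⟨part1, fun η hη => ?_⟩
  rw [part1]
  set K : ℝ := (∑ i, (cstar i) ^ 2)⁻¹ with hK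
  obtain ⟨i₀, hi₀⟩ : ∃ i, cstar i ≠ 0 := Function.ne_iff.mp hcs
  have hsumpos : 0 < ∑ i, (cstar i) ^ 2 :=
    Finset.sum_pos' (fun i _ => sq_nonneg _) ⟨i₀, Finset.mem_univ _, pow_two_pos_of_ne_zero hi₀⟩
  have hKpos : 0 < K := inv_pos.2 hsumpos
  set A := η.infoMatrix f with hAdef
  set S := {r | IsEigenvalue A r} with hSdef
  -- all eigenvalues are nonnegative
  have hS0 : ∀ r ∈ S, (0:ℝ) ≤ r := by
    rintro r ⟨v, hv, hr⟩
    obtain ⟨j, hj⟩ : ∃ j, v j ≠ 0 := Function.ne_iff.mp hv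
    have h3 : 0 < v ⬝ᵥ v :=
      Finset.sum_pos' (fun i _ => mul_self_nonneg _) ⟨j, Finset.mem_univ _, mul_self_pos.mpr hj⟩
    have h2 : 0 ≤ v ⬝ᵥ A *ᵥ v := by
      rw [quad_form]
      refine Finset.sum_nonneg fun t ht => ?_
      exact mul_nonneg (η.pos t ht).le (mul_self_nonneg _)
    have h1 : v ⬝ᵥ A *ᵥ v = r * (v ⬝ᵥ v) := by
      rw [hr, dotProduct_smul, smul_eq_mul]
    by_contra hneg
    push_neg at hneg
    nlinarith [mul_neg_of_neg_of_pos hneg h3]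
  have hbdd : BddBelow S := ⟨0, hS0⟩
  have hne : Nonempty (Fin m) := ⟨⟨0, hm⟩⟩
  have hA : A.IsHermitian := info_isHermitian η f
  set b := hA.eigenvectorBasis with hb
  set lam := hA.eigenvalues with hlam
  have hmem : ∀ i, lam i ∈ S := fun i =>
    ⟨⇑(b i), fun h0 => b.orthonormal.ne_zero i (by ext j; exact congrFun h0 j),
      hA.mulVec_eigenvectorBasis i⟩
  -- the Rayleigh bound at cstar
  have hAc1 : cstar ⬝ᵥ A *ᵥ cstar ≤ 1 := by
    rw [quad_form]
    calc ∑ t ∈ η.support, η.weight t * ((f t ⬝ᵥ cstar) * (f t ⬝ᵥ cstar))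
        ≤ ∑ t ∈ η.support, η.weight t := by
          refine Finset.sum_le_sum fun t ht => ?_
          have hb1 : |cstar ⬝ᵥ f t| ≤ 1 := hbound t (hη ht)
          rw [dotProduct_comm] at hb1
          have hx := abs_le.mp hb1
          have hw0 := (η.pos t ht).le
          have hxx : (f t ⬝ᵥ cstar) * (f t ⬝ᵥ cstar) ≤ 1 := by nlinarith
          exact mul_le_of_le_one_right hw0 hxx
      _ = 1 := η.sum_one
  -- some eigenvalue is at most K
  have hlow : ∃ i, lam i ≤ K := by
    by_contra hcon
    push_neg at hcon
    set c' : EuclideanSpace ℝ (Fin m) := WithLp.toLp 2 cstar with hc'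
    set y' : EuclideanSpace ℝ (Fin m) := WithLp.toLp 2 (A *ᵥ cstar) with hy'
    have hdp : ∀ x y : EuclideanSpace ℝ (Fin m),
        (inner ℝ x y : ℝ) = (WithLp.equiv 2 (Fin m → ℝ) x) ⬝ᵥ (WithLp.equiv 2 (Fin m → ℝ) y) := by
      intro x y
      simp [PiLp.inner_apply, dotProduct, RCLike.inner_apply, mul_comm]
    set r : Fin m → ℝ := fun i => cstar ⬝ᵥ (WithLp.equiv 2 (Fin m → ℝ) (b i)) with hrdef
    have hcoe : (WithLp.equiv 2 (Fin m → ℝ)) c' = cstar := rfl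
    have hycoe : (WithLp.equiv 2 (Fin m → ℝ)) y' = A *ᵥ cstar := rfl
    have e2 : ∑ i, (r i)^2 = ∑ i, (cstar i)^2 := by
      have hpar := b.sum_inner_mul_inner c' c'
      simp only [hdp, hcoe] at hpar
      calc ∑ i, (r i)^2
          = ∑ i, (cstar ⬝ᵥ (WithLp.equiv 2 (Fin m → ℝ)) (b i))
              * ((WithLp.equiv 2 (Fin m → ℝ)) (b i) ⬝ᵥ cstar) := by
            refine Finset.sum_congr rfl fun i _ => ?_
            rw [dotProduct_comm ((WithLp.equiv 2 (Fin m → ℝ)) (b i)) cstar]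
            simp [hrdef, sq]
        _ = cstar ⬝ᵥ cstar := hpar
        _ = ∑ i, (cstar i)^2 := by simp [dotProduct, sq]
    have e1 : cstar ⬝ᵥ A *ᵥ cstar = ∑ i, lam i * (r i)^2 := by
      have hpar := b.sum_inner_mul_inner c' y'
      simp only [hdp, hcoe, hycoe] at hpar
      rw [← hpar]
      refine Finset.sum_congr rfl fun i _ => ?_
      have hbi : (WithLp.equiv 2 (Fin m → ℝ)) (b i) ⬝ᵥ (A *ᵥ cstar)
          = lam i * ((WithLp.equiv 2 (Fin m → ℝ)) (b i) ⬝ᵥ cstar) := by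
        rw [symm_dot hA, (show A *ᵥ (WithLp.equiv 2 (Fin m → ℝ)) (b i)
          = lam i • (WithLp.equiv 2 (Fin m → ℝ)) (b i) from hA.mulVec_eigenvectorBasis i), smul_dotProduct, smul_eq_mul]
      rw [hbi, dotProduct_comm ((WithLp.equiv 2 (Fin m → ℝ)) (b i)) cstar]
      simp only [hrdef]
      ring
    obtain ⟨j, hj⟩ : ∃ j, r j ≠ 0 := by
      by_contra hall
      push_neg at hall
      rw [← e2] at hsumpos
      simp [hall] at hsumpos
    have hlt : K * ∑ i, (r i)^2 < ∑ i, lam i * (r i)^2 := by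
      rw [Finset.mul_sum]
      refine Finset.sum_lt_sum (fun i _ => ?_) ⟨j, Finset.mem_univ _, ?_⟩
      · nlinarith [(hcon i), sq_nonneg (r i)]
      · have : 0 < (r j)^2 := pow_two_pos_of_ne_zero hj
        nlinarith [hcon j]
    have hone : K * ∑ i, (r i)^2 = 1 := by
      rw [e2, hK]
      field_simp
    rw [hone, ← e1] at hlt
    linarith
  obtain ⟨i, hi⟩ := hlow
  calc lambdaMin A ≤ lam i := csInf_le hbdd (hmem i)
    _ ≤ K := hi
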